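/- Quadrangle inequality for lattice last passage percolation: let G : ℤ² → [0,∞) be a nonnegative weight array. For integers x₁ ≤ x₂ ≤ y₁ ≤ y₂ and n ≥ m, one has G[(x₁,n) → (y₁,m)] + G[(x₂,n) → (y₂,m)] ≥ G[(x₁,n) → (y₂,m)] + G[(x₂,n) → (y₁,m)]. -/

import Mathlib

/-- `π` is a lattice path from `p` to `q` in `ℤ²`: a nonempty finite sequence of
points starting at `p`, ending at `q`, in which each step increments the first
coordinate by `1` or decrements the second coordinate by `1`. -/
def IsLatPath (p q : ℤ × ℤ) (π : List (ℤ × ℤ)) : Prop :=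
  π.head? = some p ∧ π.getLast? = some q ∧
  π.Chain' (fun u v => v = (u.1 + 1, u.2) ∨ v = (u.1, u.2 - 1))

/-- The last passage value `G[p → q]`: the supremum (in `EReal`, so `−∞` if no
path exists) of the total weight collected along lattice paths from `p` to `q`. -/
noncomputable def lppVal (G : ℤ × ℤ → ℝ) (p q : ℤ × ℤ) : EReal :=
  sSup {s : EReal | ∃ π : List (ℤ × ℤ), IsLatPath p q π ∧ s = (((π.map G).sum : ℝ) : EReal)}

namespace LppAux

/-- Along a lattice path, the second coordinate is nonincreasing. -/
lemma snd_le_of_path : ∀ (π : List (ℤ × ℤ)) (p q : ℤ × ℤ),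
    IsLatPath p q π → q.2 ≤ p.2 := by
  intro π
  induction π with
  | nil => intro p q h; simp [IsLatPath] at h
  | cons a l ih =>
    intro p q h
    obtain ⟨h1, h2, h3⟩ := h
    simp only [List.head?_cons, Option.some.injEq] at h1
    subst h1
    cases l with
    | nil =>
      simp only [List.getLast?_singleton, Option.some.injEq] at h2
      subst h2; exact le_refl _
    | cons b t =>
      rw [List.Chain', List.isChain_cons_cons] at h3
      have hb : q.2 ≤ b.2 := ih b q ⟨rfl, by simpa using h2, h3.2⟩
      rcases h3.1 with hs | hs <;> subst hs <;> simp at hb ⊢ <;> omega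

/-- A lattice path whose endpoints lie at the same height passes through every
intermediate abscissa at that height. -/
lemma horizontal_cover : ∀ (π : List (ℤ × ℤ)) (a d c x : ℤ),
    IsLatPath (a, c) (d, c) π → a ≤ x → x ≤ d → (x, c) ∈ π := by
  intro π
  induction π with
  | nil => intro a d c x h; simp [IsLatPath] at h
  | cons p l ih =>
    intro a d c x h hax hxd
    obtain ⟨h1, h2, h3⟩ := h
    simp only [List.head?_cons, Option.some.injEq] at h1
    subst h1
    cases l with
    | nil =>
      simp only [List.getLast?_singleton, Option.some.injEq, Prod.mk.injEq] at h2
      have : x = a := by omega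
      subst this; exact List.mem_singleton.2 rfl
    | cons b t =>
      rw [List.Chain', List.isChain_cons_cons] at h3
      have hbl : IsLatPath b (d, c) (b :: t) := ⟨rfl, by simpa using h2, h3.2⟩
      rcases h3.1 with hs | hs
      · subst hs
        rcases eq_or_lt_of_le hax with rfl | hlt
        · exact List.mem_cons_self
        · exact List.mem_cons_of_mem _ (ih (a + 1) d c x (by simpa using hbl) (by omega) hxd)
      · subst hs
        have := snd_le_of_path _ _ _ hbl
        simp at this

/-- Crossing lemma: two lattice paths starting at the same height, with the
left/right order of start points reversed at the end, must share a point. -/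
lemma crossing : ∀ (N : ℕ) (π ρ : List (ℤ × ℤ)) (a b y₁ y₂ m n : ℤ),
    π.length + ρ.length ≤ N →
    IsLatPath (a, n) (y₂, m) π → IsLatPath (b, n) (y₁, m) ρ →
    a ≤ b → y₁ ≤ y₂ → ∃ v, v ∈ π ∧ v ∈ ρ := by
  intro N
  induction N with
  | zero =>
    intro π ρ a b y₁ y₂ m n hlen hπ hρ _ _
    cases π with
    | nil => simp [IsLatPath] at hπ
    | cons p t => simp at hlen
  | succ N ih =>
    intro π ρ a b y₁ y₂ m n hlen hπ hρ hab hy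
    rcases eq_or_lt_of_le hab with rfl | hab'
    · refine ⟨(a, n), ?_, ?_⟩
      · exact List.mem_of_mem_head? (by rw [hπ.1]; rfl)
      · exact List.mem_of_mem_head? (by rw [hρ.1]; rfl)
    · -- a < b
      obtain ⟨hρ1, hρ2, hρ3⟩ := hρ
      cases ρ with
      | nil => simp at hρ1
      | cons r ρt =>
        simp only [List.head?_cons, Option.some.injEq] at hρ1
        subst hρ1
        cases ρt with
        | nil =>
          -- ρ is a singleton, so (b,n) = (y₁,m)
          simp only [List.getLast?_singleton, Option.some.injEq, Prod.mk.injEq] at hρ2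
          obtain ⟨hb, hn⟩ := hρ2
          subst hb hn
          refine ⟨(b, n), ?_, List.mem_singleton.2 rfl⟩
          exact horizontal_cover π a y₂ n b hπ (le_of_lt hab') hy
        | cons r2 ρt2 =>
          rw [List.Chain', List.isChain_cons_cons] at hρ3
          rcases hρ3.1 with hs | hs
          · -- ρ steps right
            subst hs
            have hρ' : IsLatPath (b + 1, n) (y₁, m) (((b, n).1 + 1, (b, n).2) :: ρt2) :=
              ⟨rfl, by simpa using hρ2, hρ3.2⟩
            obtain ⟨v, hv1, hv2⟩ := ih π _ a (b + 1) y₁ y₂ m n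
              (by simp at hlen ⊢; omega) hπ hρ' (by omega) hy
            exact ⟨v, hv1, List.mem_cons_of_mem _ hv2⟩
          · -- ρ steps down
            subst hs
            have hρ' : IsLatPath (b, n - 1) (y₁, m) (((b, n).1, (b, n).2 - 1) :: ρt2) :=
              ⟨rfl, by simpa using hρ2, hρ3.2⟩
            obtain ⟨hπ1, hπ2, hπ3⟩ := hπ
            cases π with
            | nil => simp at hπ1
            | cons p πt =>
              simp only [List.head?_cons, Option.some.injEq] at hπ1
              subst hπ1
              cases πt with
              | nil =>
                simp only [List.getLast?_singleton, Option.some.injEq, Prod.mk.injEq] at hπ2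
                obtain ⟨ha, hn⟩ := hπ2
                exfalso
                have h := snd_le_of_path _ _ _ hρ'
                simp at h; omega
              | cons s πu =>
                rw [List.Chain', List.isChain_cons_cons] at hπ3
                rcases hπ3.1 with ht | ht
                · -- π steps right
                  subst ht
                  have hπ' : IsLatPath (a + 1, n) (y₂, m) (((a, n).1 + 1, (a, n).2) :: πu) :=
                    ⟨rfl, by simpa using hπ2, hπ3.2⟩
                  have hρfull : IsLatPath (b, n) (y₁, m)
                      ((b, n) :: ((b, n).1, (b, n).2 - 1) :: ρt2) :=
                    ⟨rfl, hρ2, List.isChain_cons_cons.mpr ⟨Or.inr rfl, hρ3.2⟩⟩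
                  obtain ⟨v, hv1, hv2⟩ := ih _ _ (a + 1) b y₁ y₂ m n
                    (by simp at hlen ⊢; omega) hπ' hρfull (by omega) hy
                  exact ⟨v, List.mem_cons_of_mem _ hv1, hv2⟩
                · -- π steps down
                  subst ht
                  have hπ' : IsLatPath (a, n - 1) (y₂, m) (((a, n).1, (a, n).2 - 1) :: πu) :=
                    ⟨rfl, by simpa using hπ2, hπ3.2⟩
                  obtain ⟨v, hv1, hv2⟩ := ih _ _ a b y₁ y₂ m (n - 1)
                    (by simp at hlen ⊢; omega) hπ' hρ' hab hy
                  exact ⟨v, List.mem_cons_of_mem _ hv1, List.mem_cons_of_mem _ hv2⟩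

/-- Tail-swapping at a common point of two lattice paths. -/
lemma swap (G : ℤ × ℤ → ℝ) {p q p' q' v : ℤ × ℤ} {π ρ : List (ℤ × ℤ)}
    (hπ : IsLatPath p q π) (hρ : IsLatPath p' q' ρ) (hvπ : v ∈ π) (hvρ : v ∈ ρ) :
    ∃ π' ρ' : List (ℤ × ℤ), IsLatPath p q' π' ∧ IsLatPath p' q ρ' ∧
      ((π'.map G).sum + (ρ'.map G).sum = (π.map G).sum + (ρ.map G).sum) := by
  obtain ⟨σ₁, σ₂, rfl⟩ := List.append_of_mem hvπ
  obtain ⟨τ₁, τ₂, rfl⟩ := List.append_of_mem hvρ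
  obtain ⟨hπ1, hπ2, hπ3⟩ := hπ
  obtain ⟨hρ1, hρ2, hρ3⟩ := hρ
  rw [List.Chain', List.isChain_append] at hπ3 hρ3
  rw [List.getLast?_append_of_ne_nil _ (by simp)] at hπ2 hρ2
  refine ⟨σ₁ ++ v :: τ₂, τ₁ ++ v :: σ₂, ⟨?_, ?_, ?_⟩, ⟨?_, ?_, ?_⟩, ?_⟩
  · cases σ₁ <;> simpa using hπ1
  · rw [List.getLast?_append_of_ne_nil _ (by simp)]; exact hρ2
  · exact List.isChain_append.mpr ⟨hπ3.1, hρ3.2.1, by simpa using hπ3.2.2⟩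
  · cases τ₁ <;> simpa using hρ1
  · rw [List.getLast?_append_of_ne_nil _ (by simp)]; exact hπ2
  · exact List.isChain_append.mpr ⟨hρ3.1, hπ3.2.1, by simpa using hρ3.2.2⟩
  · simp only [List.map_append, List.sum_append, List.map_cons, List.sum_cons]
    ring

end LppAux

/-- Quadrangle inequality for lattice last passage percolation with nonnegative
weights: for `x₁ ≤ x₂ ≤ y₁ ≤ y₂` and `n ≥ m`,
`G[(x₁,n)→(y₁,m)] + G[(x₂,n)→(y₂,m)] ≥ G[(x₁,n)→(y₂,m)] + G[(x₂,n)→(y₁,m)]`. -/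
theorem lpp_quadrangle_inequality (G : ℤ × ℤ → ℝ) (hG : ∀ v, 0 ≤ G v)
    (x₁ x₂ y₁ y₂ m n : ℤ)
    (h₁ : x₁ ≤ x₂) (h₂ : x₂ ≤ y₁) (h₃ : y₁ ≤ y₂) (hmn : m ≤ n) :
    lppVal G (x₁, n) (y₂, m) + lppVal G (x₂, n) (y₁, m) ≤
      lppVal G (x₁, n) (y₁, m) + lppVal G (x₂, n) (y₂, m) := by
  refine EReal.add_le_of_forall_lt fun a' ha' b' hb' => ?_
  simp only [lppVal] at ha' hb'
  obtain ⟨s, hs, has⟩ := lt_sSup_iff.1 ha'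
  obtain ⟨π, hπ, rfl⟩ := hs
  obtain ⟨t, ht, hbt⟩ := lt_sSup_iff.1 hb'
  obtain ⟨ρ, hρ, rfl⟩ := ht
  obtain ⟨v, hvπ, hvρ⟩ := LppAux.crossing (π.length + ρ.length) π ρ x₁ x₂ y₁ y₂ m n
    le_rfl hπ hρ h₁ h₃
  obtain ⟨π', ρ', hπ', hρ', hsum⟩ := LppAux.swap G hπ hρ hvπ hvρ
  calc a' + b' ≤ (((π.map G).sum : ℝ) : EReal) + (((ρ.map G).sum : ℝ) : EReal) :=
        add_le_add has.le hbt.le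
    _ = (((π'.map G).sum + (ρ'.map G).sum : ℝ) : EReal) := by rw [← EReal.coe_add, hsum]
    _ = (((π'.map G).sum : ℝ) : EReal) + (((ρ'.map G).sum : ℝ) : EReal) := EReal.coe_add _ _
    _ ≤ lppVal G (x₁, n) (y₁, m) + lppVal G (x₂, n) (y₂, m) :=
        add_le_add (le_sSup ⟨π', hπ', rfl⟩) (le_sSup ⟨ρ', hρ', rfl⟩)
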